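/- Suppose f : ℕ → ℂ satisfies ∑ₙ f(n)xⁿ = P(x)/Q(x) with Q(x) = ∏ᵢ₌₁ᵏ (1-λᵢx)^{dᵢ}, the λᵢ distinct and nonzero, deg P < deg Q. If λ = λ₁ is a positive real with d₁ = 1 and |λᵢ| < λ for i ≥ 2, then f(n)/λⁿ converges to a = -λ·P(1/λ)/Q'(1/λ) as n → ∞. -/

import Mathlib

open Polynomial Filter

lemma mk_sub_shift (g : ℕ → ℂ) (μ : ℂ) :
    PowerSeries.mk (fun n => g n - μ * (if n = 0 then 0 else g (n-1)))
      = PowerSeries.mk g * ((1 - Polynomial.C μ * Polynomial.X : Polynomial ℂ) : PowerSeries ℂ) := by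
  have : ((1 - Polynomial.C μ * Polynomial.X : Polynomial ℂ) : PowerSeries ℂ)
      = 1 - PowerSeries.C μ * PowerSeries.X := by
    push_cast [Polynomial.coe_sub, Polynomial.coe_one, Polynomial.coe_mul, Polynomial.coe_C, Polynomial.coe_X]
    ring
  rw [this]
  ext n
  have : PowerSeries.mk g * (1 - PowerSeries.C μ * PowerSeries.X)
      = PowerSeries.mk g - PowerSeries.C μ * (PowerSeries.mk g * PowerSeries.X) := by ring
  rw [this, map_sub, PowerSeries.coeff_C_mul, PowerSeries.coeff_mk]
  cases n with
  | zero => simp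
  | succ m => simp [PowerSeries.coeff_succ_mul_X]

lemma sum_rep (g : ℕ → ℂ) (μ : ℂ) (n : ℕ) :
    g n = ∑ j ∈ Finset.range (n+1), μ^(n-j) * (g j - μ * (if j = 0 then 0 else g (j-1))) := by
  induction n with
  | zero => simp
  | succ m ih =>
    rw [Finset.sum_range_succ]
    have : ∀ j ∈ Finset.range (m+1), μ^(m+1-j) * (g j - μ * (if j = 0 then 0 else g (j-1)))
        = μ * (μ^(m-j) * (g j - μ * (if j = 0 then 0 else g (j-1)))) := by
      intro j hj
      rw [Finset.mem_range] at hj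
      rw [← mul_assoc, ← pow_succ']
      congr 2
      omega
    rw [Finset.sum_congr rfl this, ← Finset.mul_sum, ← ih]
    simp

lemma growth (ρ : ℝ) (hρ : 0 < ρ) (M : Multiset ℂ) :
    ∀ (hM : ∀ μ ∈ M, ‖μ‖ ≤ ρ)
    (g : ℕ → ℂ) (T : Polynomial ℂ),
      (PowerSeries.mk g *
        (((M.map (fun μ => 1 - Polynomial.C μ * Polynomial.X)).prod : Polynomial ℂ) : PowerSeries ℂ)
        = (T : PowerSeries ℂ)) →
      ∃ C : ℝ, ∀ n, ‖g n‖ ≤ C * (n+1)^(Multiset.card M) * ρ^n := by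
  induction M using Multiset.induction_on with
  | empty =>
    intro _ g T h
    simp only [Multiset.map_zero, Multiset.prod_zero, Polynomial.coe_one, mul_one] at h
    refine ⟨∑ j ∈ Finset.range (T.natDegree + 1), ‖T.coeff j‖ * ρ⁻¹^j, fun n => ?_⟩
    have hg : g n = T.coeff n := by
      have := congrArg (PowerSeries.coeff n) h
      simpa [PowerSeries.coeff_mk, Polynomial.coeff_coe] using this
    simp only [Multiset.card_zero, pow_zero, mul_one]
    rcases le_or_gt n T.natDegree with hn | hn
    · calc ‖g n‖ = (‖T.coeff n‖ * ρ⁻¹^n) * ρ^n := by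
            rw [hg, inv_pow, mul_assoc, inv_mul_cancel₀ (pow_ne_zero n hρ.ne'), mul_one]
          _ ≤ _ := by
            apply mul_le_mul_of_nonneg_right _ (by positivity)
            exact Finset.single_le_sum (f := fun j => ‖T.coeff j‖ * ρ⁻¹^j)
              (fun j _ => by positivity) (Finset.mem_range.mpr (by omega))
    · rw [hg, Polynomial.coeff_eq_zero_of_natDegree_lt hn]
      simp only [norm_zero]
      positivity
  | cons μ M ih =>
    intro hM g T h
    set g' : ℕ → ℂ := fun n => g n - μ * (if n = 0 then 0 else g (n-1)) with hg'
    have hmk : PowerSeries.mk g' *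
        (((M.map (fun μ => 1 - Polynomial.C μ * Polynomial.X)).prod : Polynomial ℂ) : PowerSeries ℂ)
        = (T : PowerSeries ℂ) := by
      rw [hg', mk_sub_shift]
      rw [Multiset.map_cons, Multiset.prod_cons, Polynomial.coe_mul, ← mul_assoc] at h
      exact h
    obtain ⟨C, hC⟩ := ih (fun ν hν => hM ν (Multiset.mem_cons_of_mem hν)) g' T hmk
    have hC0 : 0 ≤ C := by
      have h1 := hC 0
      simp at h1
      exact le_trans (norm_nonneg _) h1
    refine ⟨C, fun n => ?_⟩
    have hrep := sum_rep g μ n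
    rw [Multiset.card_cons]
    calc ‖g n‖ ≤ ∑ j ∈ Finset.range (n+1), ‖μ^(n-j) * g' j‖ := by
          rw [hrep]; exact norm_sum_le _ _
      _ ≤ ∑ j ∈ Finset.range (n+1), C * (n+1)^(Multiset.card M) * ρ^n := by
          apply Finset.sum_le_sum
          intro j hj
          rw [Finset.mem_range] at hj
          rw [norm_mul, norm_pow]
          have h1 : ‖μ‖ ^ (n-j) ≤ ρ^(n-j) :=
            pow_le_pow_left₀ (norm_nonneg _) (hM μ (Multiset.mem_cons_self _ _)) _
          have h2 : ‖g' j‖ ≤ C * (j+1)^(Multiset.card M) * ρ^j := hC j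
          calc ‖μ‖ ^ (n-j) * ‖g' j‖
              ≤ ρ^(n-j) * (C * (j+1)^(Multiset.card M) * ρ^j) := by
                apply mul_le_mul h1 h2 (norm_nonneg _) (by positivity)
            _ = C * (j+1)^(Multiset.card M) * ρ^n := by
                rw [show ρ^(n-j) * (C * ((j:ℝ)+1)^(Multiset.card M) * ρ^j)
                  = C * ((j:ℝ)+1)^(Multiset.card M) * (ρ^(n-j) * ρ^j) by ring,
                  ← pow_add, Nat.sub_add_cancel (by omega)]
            _ ≤ C * (n+1)^(Multiset.card M) * ρ^n := by
                have hjn : (j:ℝ) + 1 ≤ (n:ℝ) + 1 := by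
                  have : (j:ℝ) ≤ (n:ℝ) := by exact_mod_cast Nat.lt_succ_iff.mp hj
                  linarith
                have : ((j:ℝ)+1)^(Multiset.card M) ≤ ((n:ℝ)+1)^(Multiset.card M) :=
                  pow_le_pow_left₀ (by positivity) hjn _
                exact mul_le_mul_of_nonneg_right (mul_le_mul_of_nonneg_left this hC0)
                  (le_of_lt (pow_pos hρ n))
      _ = C * (n+1)^(Multiset.card M + 1) * ρ^n := by
          rw [Finset.sum_const, Finset.card_range]
          push_cast
          ring

theorem dominant_simple_pole_asymptotics (f : ℕ → ℂ) (P Q : Polynomial ℂ)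
    (k : ℕ) (hk : 1 ≤ k) (lam : Fin k → ℂ) (d : Fin k → ℕ)
    (hinj : Function.Injective lam) (hne : ∀ i, lam i ≠ 0)
    (hQ : Q = ∏ i : Fin k, (1 - Polynomial.C (lam i) * Polynomial.X) ^ (d i))
    (hdeg : P.degree < Q.degree)
    (hgen : PowerSeries.mk f * (Q : PowerSeries ℂ) = (P : PowerSeries ℂ))
    (r : ℝ) (hr : 0 < r) (hlam0 : lam ⟨0, hk⟩ = (r : ℂ))
    (hd0 : d ⟨0, hk⟩ = 1)
    (hdom : ∀ i : Fin k, i ≠ ⟨0, hk⟩ → ‖lam i‖ < r) :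
    Tendsto (fun n => f n / (lam ⟨0, hk⟩)^n) atTop
      (nhds (-(lam ⟨0, hk⟩) * P.eval (lam ⟨0, hk⟩)⁻¹ /
        (Polynomial.derivative Q).eval (lam ⟨0, hk⟩)⁻¹)) := by
  set i0 : Fin k := ⟨0, hk⟩ with hi0
  set lp : ℂ := lam i0 with hlp
  have hlne : lp ≠ 0 := hne i0
  have habs : ‖lp‖ = r := by rw [hlam0]; simp [abs_of_pos hr]
  set Q1 : Polynomial ℂ :=
    ∏ i ∈ Finset.univ.erase i0, (1 - Polynomial.C (lam i) * Polynomial.X) ^ (d i) with hQ1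
  have hQfac : Q = (1 - Polynomial.C lp * Polynomial.X) * Q1 := by
    rw [hQ, ← Finset.mul_prod_erase _ _ (Finset.mem_univ i0), hd0, pow_one]
  -- Q1 does not vanish at lp⁻¹
  have hQ1ne : Q1.eval lp⁻¹ ≠ 0 := by
    rw [hQ1, Polynomial.eval_prod]
    apply Finset.prod_ne_zero_iff.mpr
    intro i hi
    simp only [Polynomial.eval_pow, Polynomial.eval_sub, Polynomial.eval_one,
      Polynomial.eval_mul, Polynomial.eval_C, Polynomial.eval_X]
    apply pow_ne_zero
    intro hcon
    have heq : lam i = lp := by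
      have h3 : lam i * lp⁻¹ = 1 := by linear_combination -hcon
      field_simp at h3
      exact h3
    have h4 := hdom i (Finset.ne_of_mem_erase hi)
    rw [heq, habs] at h4
    exact lt_irrefl _ h4
  set a : ℂ := P.eval lp⁻¹ / Q1.eval lp⁻¹ with ha
  -- the limit value equals a
  have hval : -lp * P.eval lp⁻¹ / (Polynomial.derivative Q).eval lp⁻¹ = a := by
    have hd : (Polynomial.derivative Q).eval lp⁻¹ = -lp * Q1.eval lp⁻¹ := by
      rw [hQfac, Polynomial.derivative_mul]
      simp only [Polynomial.derivative_sub, Polynomial.derivative_one,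
        Polynomial.derivative_C_mul, Polynomial.derivative_X, mul_one,
        Polynomial.eval_add, Polynomial.eval_mul, Polynomial.eval_sub,
        Polynomial.eval_neg, Polynomial.eval_one, Polynomial.eval_C, Polynomial.eval_X,
        zero_sub]
      rw [mul_inv_cancel₀ hlne]
      ring
    rw [hd, mul_div_mul_left _ _ (neg_ne_zero.mpr hlne)]
  rw [hval]
  -- the remainder polynomial
  set R : Polynomial ℂ := P - Polynomial.C a * Q1 with hR
  have hRroot : R.eval lp⁻¹ = 0 := by
    rw [hR]
    simp only [Polynomial.eval_sub, Polynomial.eval_mul, Polynomial.eval_C]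
    rw [ha, div_mul_cancel₀ _ hQ1ne]
    ring
  obtain ⟨S, hS⟩ := (Polynomial.dvd_iff_isRoot.mpr hRroot)
  set T : Polynomial ℂ := Polynomial.C (-lp⁻¹) * S with hT
  have hRfac : R = (1 - Polynomial.C lp * Polynomial.X) * T := by
    rw [hS, hT]
    have : (1 - Polynomial.C lp * Polynomial.X) * Polynomial.C (-lp⁻¹)
        = Polynomial.X - Polynomial.C lp⁻¹ := by
      rw [sub_mul, one_mul, mul_comm (Polynomial.C lp) Polynomial.X, mul_assoc,
        ← Polynomial.C_mul, mul_neg, mul_inv_cancel₀ hlne]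
      simp [sub_eq_add_neg]
      ring
    rw [← mul_assoc, this]
  -- the error sequence
  set g : ℕ → ℂ := fun n => f n - a * lp^n with hg
  have hgeo : PowerSeries.mk (fun n => a * lp^n) *
      ((1 - Polynomial.C lp * Polynomial.X : Polynomial ℂ) : PowerSeries ℂ)
      = ((Polynomial.C a : Polynomial ℂ) : PowerSeries ℂ) := by
    have hco : ((1 - Polynomial.C lp * Polynomial.X : Polynomial ℂ) : PowerSeries ℂ)
        = 1 - PowerSeries.C lp * PowerSeries.X := by
      push_cast [Polynomial.coe_sub, Polynomial.coe_one, Polynomial.coe_mul,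
        Polynomial.coe_C, Polynomial.coe_X]
      ring
    rw [hco, Polynomial.coe_C]
    ext n
    have : PowerSeries.mk (fun n => a * lp^n) * (1 - PowerSeries.C lp * PowerSeries.X)
        = PowerSeries.mk (fun n => a * lp^n)
          - PowerSeries.C lp * (PowerSeries.mk (fun n => a * lp^n) * PowerSeries.X) := by
      ring
    rw [this, map_sub, PowerSeries.coeff_C_mul, PowerSeries.coeff_mk]
    cases n with
    | zero => simp
    | succ m =>
      simp [PowerSeries.coeff_succ_mul_X, PowerSeries.coeff_mk, PowerSeries.coeff_C]
      ring
  have hgQ : PowerSeries.mk g * (Q : PowerSeries ℂ) = ((R : Polynomial ℂ) : PowerSeries ℂ) := by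
    have hsplit : PowerSeries.mk g
        = PowerSeries.mk f - PowerSeries.mk (fun n => a * lp^n) := by
      ext n; simp [hg, PowerSeries.coeff_mk]
    rw [hsplit, sub_mul, hgen]
    have : PowerSeries.mk (fun n => a * lp^n) * (Q : PowerSeries ℂ)
        = ((Polynomial.C a * Q1 : Polynomial ℂ) : PowerSeries ℂ) := by
      rw [hQfac, Polynomial.coe_mul, ← mul_assoc, hgeo, ← Polynomial.coe_mul]
    rw [this, hR, Polynomial.coe_sub]
  -- cancel the dominant factor
  have hgQ1 : PowerSeries.mk g * ((Q1 : Polynomial ℂ) : PowerSeries ℂ)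
      = ((T : Polynomial ℂ) : PowerSeries ℂ) := by
    have hu : IsUnit ((1 - Polynomial.C lp * Polynomial.X : Polynomial ℂ) : PowerSeries ℂ) := by
      apply PowerSeries.isUnit_iff_constantCoeff.mpr
      simp [Polynomial.coe_sub, Polynomial.coe_one, Polynomial.coe_mul,
        Polynomial.coe_C, Polynomial.coe_X]
    apply hu.mul_left_cancel
    calc ((1 - Polynomial.C lp * Polynomial.X : Polynomial ℂ) : PowerSeries ℂ)
          * (PowerSeries.mk g * ((Q1 : Polynomial ℂ) : PowerSeries ℂ))
        = PowerSeries.mk g * (Q : PowerSeries ℂ) := by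
          rw [hQfac, Polynomial.coe_mul]; ring
      _ = ((R : Polynomial ℂ) : PowerSeries ℂ) := hgQ
      _ = _ := by rw [hRfac, Polynomial.coe_mul]
  -- choose a uniform subdominant bound
  obtain ⟨ρ, hρpos, hρr, hρbd⟩ : ∃ ρ : ℝ, 0 < ρ ∧ ρ < r ∧
      ∀ i ∈ Finset.univ.erase i0, ‖lam i‖ ≤ ρ := by
    set s : Finset ℝ :=
      insert (r/2) ((Finset.univ.erase i0).image (fun i => ‖lam i‖)) with hs
    have hsne : s.Nonempty := ⟨r/2, Finset.mem_insert_self _ _⟩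
    refine ⟨s.max' hsne, ?_, ?_, ?_⟩
    · have h1 : r/2 ≤ s.max' hsne := Finset.le_max' _ _ (Finset.mem_insert_self _ _)
      linarith
    · have hmem := Finset.max'_mem s hsne
      rcases Finset.mem_insert.mp hmem with heq | hmem
      · rw [heq]; linarith
      · obtain ⟨i, hi, heq⟩ := Finset.mem_image.mp hmem
        rw [← heq]
        exact hdom i (Finset.ne_of_mem_erase hi)
    · intro i hi
      exact Finset.le_max' _ _ (Finset.mem_insert_of_mem (Finset.mem_image_of_mem (fun i => ‖lam i‖) hi))
  -- the multiset of subdominant roots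
  set M : Multiset ℂ := (Finset.univ.erase i0).val.bind
    (fun i => Multiset.replicate (d i) (lam i)) with hM
  have hMprod : ((M.map (fun μ => 1 - Polynomial.C μ * Polynomial.X)).prod : Polynomial ℂ)
      = Q1 := by
    rw [hM, Multiset.map_bind, Multiset.prod_bind, hQ1, Finset.prod_eq_multiset_prod]
    congr 1
    apply Multiset.map_congr rfl
    intro i hi
    simp [Multiset.map_replicate, Multiset.prod_replicate]
  have hMmem : ∀ μ ∈ M, ‖μ‖ ≤ ρ := by
    intro μ hμ
    rw [hM, Multiset.mem_bind] at hμ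
    obtain ⟨i, hi, hμ⟩ := hμ
    rw [Multiset.eq_of_mem_replicate hμ]
    exact hρbd i hi
  obtain ⟨C, hC⟩ := growth ρ hρpos M hMmem g T (by rw [hMprod]; exact hgQ1)
  set D : ℕ := Multiset.card M with hD
  set x : ℝ := ρ / r with hx
  have hx0 : 0 < x := div_pos hρpos hr
  have hx1 : x < 1 := (div_lt_one hr).mpr hρr
  have hlim : Tendsto (fun n : ℕ => ((n:ℝ)+1)^D * x^(n+1)) atTop (nhds 0) := by
    have h := tendsto_pow_const_mul_const_pow_of_abs_lt_one D
      (abs_lt.mpr ⟨by linarith, hx1⟩)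
    have h2 := h.comp (tendsto_add_atTop_nat 1)
    convert h2 using 2 with n
    simp [Function.comp]
  have hbnd : ∀ n : ℕ, ‖g n / lp^n‖ ≤ C/x * (((n:ℝ)+1)^D * x^(n+1)) := by
    intro n
    have h1 : ‖g n / lp^n‖ = ‖g n‖ / r^n := by
      rw [norm_div, norm_pow, habs]
    have h2 : C/x * (((n:ℝ)+1)^D * x^(n+1)) = (C * ((n:ℝ)+1)^D * ρ^n) / r^n := by
      rw [hx]
      rw [div_pow]
      field_simp
      ring
    rw [h1, h2]
    gcongr
    exact hC n
  have hzero : Tendsto (fun n : ℕ => g n / lp^n) atTop (nhds 0) := by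
    rw [tendsto_zero_iff_norm_tendsto_zero]
    apply squeeze_zero (fun n => norm_nonneg _) hbnd
    have := hlim.const_mul (C/x)
    simpa using this
  have heq : (fun n : ℕ => f n / lp^n) = fun n : ℕ => g n / lp^n + a := by
    funext n
    rw [hg]
    have hpne : lp^n ≠ 0 := pow_ne_zero n hlne
    field_simp
    ring
  rw [heq]
  simpa using hzero.add_const a
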